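/- Let p ≥ 3 be a prime and let μ be a probability distribution on F_p supported on more than one value. For any r ≥ 1 and ε > 0, there exists K ∈ ℕ such that the following holds for all m, n ≥ 1. Let M ∈ F_p^{m×n} be a matrix and let I_1,…,I_K ⊆ {1,…,n} be pairwise disjoint sets such that for each i = 1,…,K, the m×|I_i| submatrix of M consisting of the columns indexed by I_i has rank at least r. Let x ∈ F_p^n be a random vector with independent μ-distributed entries. Then Pr[Mx = 0] ≤ p^{-r} + ε. -/

import Mathlib

open scoped Classical

open Finset

section Aux

lemma addChar_map_sum {A M : Type*} [AddCommMonoid A] [CommMonoid M] (ψ : AddChar A M)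
    {ι : Type*} (s : Finset ι) (f : ι → A) :
    ψ (∑ i ∈ s, f i) = ∏ i ∈ s, ψ (f i) := by
  classical
  induction s using Finset.induction_on with
  | empty => simp
  | insert a s h ih => rw [Finset.sum_insert h, Finset.prod_insert h, ψ.map_add_eq_mul, ih]

lemma unit_re_lt_one {u : ℂ} (hu : ‖u‖ = 1) (hne : u ≠ 1) : u.re < 1 := by
  have h := Complex.re_le_norm u
  rw [hu] at h
  rcases h.lt_or_eq with h | h
  · exact h
  · exfalso
    apply hne
    have hns : Complex.normSq u = 1 := by
      rw [← Complex.sq_norm, hu]; norm_num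
    rw [Complex.normSq_apply, h] at hns
    have him : u.im = 0 := by nlinarith [sq_nonneg u.im]
    exact Complex.ext h him

lemma two_point_strict {w₁ w₂ : ℂ} (h1 : ‖w₁‖ = 1) (h2 : ‖w₂‖ = 1) (hne : w₁ ≠ w₂)
    {c₁ c₂ : ℝ} (hc₁ : 0 < c₁) (hc₂ : 0 < c₂) :
    ‖(c₁ : ℂ) * w₁ + (c₂ : ℂ) * w₂‖ < c₁ + c₂ := by
  have hu : ‖w₁ * (starRingEnd ℂ) w₂‖ = 1 := by
    rw [norm_mul, RCLike.norm_conj, h1, h2, one_mul]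
  have hw2 : (starRingEnd ℂ) w₂ * w₂ = 1 := by
    rw [mul_comm, Complex.mul_conj]
    rw [← Complex.sq_norm, h2]; norm_num
  have hune : w₁ * (starRingEnd ℂ) w₂ ≠ 1 := by
    intro h
    apply hne
    calc w₁ = w₁ * ((starRingEnd ℂ) w₂ * w₂) := by rw [hw2, mul_one]
    _ = (w₁ * (starRingEnd ℂ) w₂) * w₂ := by ring
    _ = w₂ := by rw [h, one_mul]
  have hre : (w₁ * (starRingEnd ℂ) w₂).re < 1 := unit_re_lt_one hu hune
  have hsq : ∀ z : ℂ, ‖z‖ ^ 2 = Complex.normSq z := fun z => by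
    rw [Complex.sq_norm]
  have key : ‖(c₁ : ℂ) * w₁ + (c₂ : ℂ) * w₂‖ ^ 2 < (c₁ + c₂) ^ 2 := by
    rw [hsq, Complex.normSq_add]
    have e1 : Complex.normSq ((c₁ : ℂ) * w₁) = c₁ ^ 2 := by
      rw [Complex.normSq_mul, Complex.normSq_ofReal, ← hsq w₁, h1]; ring
    have e2 : Complex.normSq ((c₂ : ℂ) * w₂) = c₂ ^ 2 := by
      rw [Complex.normSq_mul, Complex.normSq_ofReal, ← hsq w₂, h2]; ring
    have e3 : ((c₁ : ℂ) * w₁ * (starRingEnd ℂ) ((c₂ : ℂ) * w₂)).re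
        = c₁ * c₂ * (w₁ * (starRingEnd ℂ) w₂).re := by
      rw [map_mul, Complex.conj_ofReal]
      have : (c₁ : ℂ) * w₁ * ((c₂ : ℂ) * (starRingEnd ℂ) w₂)
          = ((c₁ * c₂ : ℝ) : ℂ) * (w₁ * (starRingEnd ℂ) w₂) := by push_cast; ring
      rw [this, Complex.re_ofReal_mul]
    rw [e1, e2, e3]
    nlinarith [mul_pos (mul_pos hc₁ hc₂) (sub_pos.mpr hre)]
  have hnn : (0:ℝ) ≤ c₁ + c₂ := by linarith
  exact lt_of_pow_lt_pow_left₀ 2 hnn key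

end Aux

section Phi

variable {p : ℕ} [Fact p.Prime] {ψ : AddChar (ZMod p) ℂ} {μ : ZMod p → ℝ}

lemma phi_le_one (hμ0 : ∀ z, 0 ≤ μ z) (hμ1 : ∑ z, μ z = 1) (t : ZMod p) :
    ‖∑ z, (μ z : ℂ) * ψ (t * z)‖ ≤ 1 := by
  calc ‖∑ z, (μ z : ℂ) * ψ (t * z)‖ ≤ ∑ z, ‖(μ z : ℂ) * ψ (t * z)‖ := norm_sum_le _ _
  _ = ∑ z, μ z := by
      refine Finset.sum_congr rfl fun z _ => ?_
      rw [norm_mul, AddChar.norm_apply, mul_one, Complex.norm_real,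
        Real.norm_eq_abs, abs_of_nonneg (hμ0 z)]
  _ = 1 := hμ1

lemma phi_lt_one (hψ : ψ.IsPrimitive) (hμ0 : ∀ z, 0 ≤ μ z) (hμ1 : ∑ z, μ z = 1)
    (hμsupp : ∃ a b : ZMod p, a ≠ b ∧ μ a ≠ 0 ∧ μ b ≠ 0)
    {t : ZMod p} (ht : t ≠ 0) : ‖∑ z, (μ z : ℂ) * ψ (t * z)‖ < 1 := by
  obtain ⟨a, b, hab, ha, hb⟩ := hμsupp
  set f : ZMod p → ℂ := fun z => (μ z : ℂ) * ψ (t * z) with hf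
  have hb' : b ∈ (Finset.univ : Finset (ZMod p)).erase a :=
    Finset.mem_erase.2 ⟨hab.symm, Finset.mem_univ b⟩
  have hsplit : ∑ z, f z = f a + (f b + ∑ z ∈ ((Finset.univ.erase a).erase b), f z) := by
    rw [Finset.add_sum_erase _ f hb', Finset.add_sum_erase _ f (Finset.mem_univ a)]
  have hsplitμ : (1:ℝ) = μ a + (μ b + ∑ z ∈ ((Finset.univ.erase a).erase b), μ z) := by
    rw [Finset.add_sum_erase _ μ hb', Finset.add_sum_erase _ μ (Finset.mem_univ a), hμ1]
  have hne : ψ (t * a) ≠ ψ (t * b) := by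
    intro h
    have h1 : ψ (t * b) * ψ (t * (a - b)) = ψ (t * b) * 1 := by
      rw [mul_one, ← AddChar.map_add_eq_mul, ← h]
      ring_nf
    have h2 : ψ (t * (a - b)) = 1 := by
      have hnz : ψ (t * b) ≠ 0 := by
        intro h0
        have := AddChar.norm_apply ψ (t * b)
        rw [h0] at this; simp at this
      exact mul_left_cancel₀ hnz h1
    have h3 : t * (a - b) = 0 := (hψ.zmod_char_eq_one_iff p _).1 h2
    have : a - b ≠ 0 := sub_ne_zero.2 hab
    exact (mul_ne_zero ht this) h3
  have hμa : 0 < μ a := lt_of_le_of_ne (hμ0 a) (Ne.symm ha)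
  have hμb : 0 < μ b := lt_of_le_of_ne (hμ0 b) (Ne.symm hb)
  have hstrict : ‖f a + f b‖ < μ a + μ b :=
    two_point_strict (AddChar.norm_apply ψ _) (AddChar.norm_apply ψ _) hne hμa hμb
  have hrest : ‖∑ z ∈ ((Finset.univ.erase a).erase b), f z‖
      ≤ ∑ z ∈ ((Finset.univ.erase a).erase b), μ z := by
    refine (norm_sum_le _ _).trans ?_
    refine Finset.sum_le_sum fun z _ => ?_
    rw [hf]
    simp only []
    rw [norm_mul, AddChar.norm_apply, mul_one, Complex.norm_real,
      Real.norm_eq_abs, abs_of_nonneg (hμ0 z)]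
  calc ‖∑ z, f z‖ = ‖(f a + f b) + ∑ z ∈ ((Finset.univ.erase a).erase b), f z‖ := by
        rw [hsplit, add_assoc]
  _ ≤ ‖f a + f b‖ + ‖∑ z ∈ ((Finset.univ.erase a).erase b), f z‖ := norm_add_le _ _
  _ < (μ a + μ b) + ∑ z ∈ ((Finset.univ.erase a).erase b), μ z := by linarith
  _ = 1 := by rw [hsplitμ]; ring

lemma exists_delta (hψ : ψ.IsPrimitive) (hμ0 : ∀ z, 0 ≤ μ z) (hμ1 : ∑ z, μ z = 1)
    (hμsupp : ∃ a b : ZMod p, a ≠ b ∧ μ a ≠ 0 ∧ μ b ≠ 0) :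
    ∃ δ : ℝ, 0 < δ ∧ δ ≤ 1 ∧
      ∀ t : ZMod p, t ≠ 0 → ‖∑ z, (μ z : ℂ) * ψ (t * z)‖ ≤ 1 - δ := by
  have h1ne : (1 : ZMod p) ≠ 0 := one_ne_zero
  have hne : ((Finset.univ : Finset (ZMod p)).erase 0).Nonempty :=
    ⟨1, Finset.mem_erase.2 ⟨h1ne, Finset.mem_univ _⟩⟩
  set g : ZMod p → ℝ := fun t => ‖∑ z, (μ z : ℂ) * ψ (t * z)‖ with hg
  set c : ℝ := ((Finset.univ : Finset (ZMod p)).erase 0).sup' hne g with hc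
  refine ⟨1 - c, ?_, ?_, ?_⟩
  · have : c < 1 := by
      rw [hc, Finset.sup'_lt_iff]
      intro t htmem
      exact phi_lt_one hψ hμ0 hμ1 hμsupp (Finset.mem_erase.1 htmem).1
    linarith
  · have h0 : (0:ℝ) ≤ g 1 := norm_nonneg _
    have : g 1 ≤ c := Finset.le_sup' g (Finset.mem_erase.2 ⟨h1ne, Finset.mem_univ _⟩)
    linarith
  · intro t ht
    have : g t ≤ c := Finset.le_sup' g (Finset.mem_erase.2 ⟨ht, Finset.mem_univ _⟩)
    have hgt : g t = ‖∑ z, (μ z : ℂ) * ψ (t * z)‖ := rfl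
    linarith [hgt ▸ this]

end Phi

section Kernel

open Matrix in

lemma card_kernel_le {p : ℕ} [Fact p.Prime] {m r : ℕ} {ι : Type*} [Fintype ι]
    (A : Matrix (Fin m) ι (ZMod p)) (h : r ≤ A.rank) :
    ((Finset.univ : Finset (Fin m → ZMod p)).filter
      (fun ξ => Matrix.vecMul ξ A = 0)).card ≤ p ^ (m - r) := by
  classical
  have hiff : ∀ ξ : Fin m → ZMod p, Matrix.vecMul ξ A = 0 ↔ ξ ∈ LinearMap.ker (Matrix.transpose A).mulVecLin := by
    intro ξ
    rw [LinearMap.mem_ker, Matrix.mulVecLin_apply, Matrix.mulVec_transpose]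
  have hcard : ((Finset.univ : Finset (Fin m → ZMod p)).filter
      (fun ξ => Matrix.vecMul ξ A = 0)).card
      = Fintype.card (LinearMap.ker (Matrix.transpose A).mulVecLin) := by
    rw [← Fintype.card_subtype]
    exact Fintype.card_congr (Equiv.subtypeEquivRight hiff)
  rw [hcard]
  have hker : Fintype.card (LinearMap.ker (Matrix.transpose A).mulVecLin)
      = p ^ (Module.finrank (ZMod p) (LinearMap.ker (Matrix.transpose A).mulVecLin)) := by
    rw [Module.card_eq_pow_finrank (K := ZMod p), ZMod.card]
  rw [hker]
  apply Nat.pow_le_pow_right (Fact.out : p.Prime).pos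
  have hrn : Module.finrank (ZMod p) (LinearMap.range (Matrix.transpose A).mulVecLin)
      + Module.finrank (ZMod p) (LinearMap.ker (Matrix.transpose A).mulVecLin)
      = m := by
    rw [LinearMap.finrank_range_add_finrank_ker, Module.finrank_fin_fun]
  have hrk : Module.finrank (ZMod p) (LinearMap.range (Matrix.transpose A).mulVecLin) = A.rank := by
    rw [show Module.finrank (ZMod p) (LinearMap.range (Matrix.transpose A).mulVecLin) = (Matrix.transpose A).rank from rfl,
      Matrix.rank_transpose]
  omega

lemma rank_le_height' {p : ℕ} [Fact p.Prime] {m : ℕ} {ι : Type*} [Fintype ι]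
    (A : Matrix (Fin m) ι (ZMod p)) : A.rank ≤ m := by
  simpa using A.rank_le_card_height

end Kernel

section Orth

lemma sum_char_vec {p : ℕ} [Fact p.Prime] {ψ : AddChar (ZMod p) ℂ} (hψ : ψ.IsPrimitive)
    {m : ℕ} (y : Fin m → ZMod p) :
    ∑ ξ : Fin m → ZMod p, ψ (∑ k, ξ k * y k) = if y = 0 then ((p:ℂ))^m else 0 := by
  classical
  have h1 : ∀ ξ : Fin m → ZMod p, ψ (∑ k, ξ k * y k) = ∏ k, ψ (ξ k * y k) :=
    fun ξ => addChar_map_sum ψ Finset.univ _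
  simp_rw [h1]
  have hfub := Finset.prod_univ_sum (fun _ : Fin m => (Finset.univ : Finset (ZMod p)))
    (fun k t => ψ (t * y k))
  rw [Fintype.piFinset_univ] at hfub
  rw [← hfub]
  have h2 : ∀ k, ∑ t : ZMod p, ψ (t * y k) = if y k = 0 then (p:ℂ) else 0 := by
    intro k
    rw [AddChar.sum_mulShift _ hψ, ZMod.card]
    split_ifs <;> simp
  simp_rw [h2]
  by_cases hy : y = 0
  · subst hy
    simp
  · have : ∃ k, y k ≠ 0 := by
      by_contra hcon
      push_neg at hcon
      exact hy (funext hcon)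
    obtain ⟨k, hk⟩ := this
    rw [Finset.prod_eq_zero (Finset.mem_univ k) (by simp [hk]), if_neg hy]

end Orth

/-- Anticoncentration for robustly high-rank linear maps: for a prime `p ≥ 3`, a distribution
`μ` on `F_p` supported on more than one value, `r ≥ 1` and `ε > 0`, there is `K ∈ ℕ` such that
for all `m, n ≥ 1`: if `M` is an `m × n` matrix over `F_p` and `I_1, …, I_K ⊆ {1,…,n}` are
pairwise disjoint column sets with `rank M[{1,…,m} × I_i] ≥ r` for each `i`, then for a random
vector `x` with independent `μ`-distributed entries, `Pr[Mx = 0] ≤ p^{-r} + ε`. -/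
theorem robust_high_rank_anticoncentration (p : ℕ) [Fact p.Prime] (hp3 : 3 ≤ p)
    (μ : ZMod p → ℝ) (hμ0 : ∀ z, 0 ≤ μ z) (hμ1 : ∑ z, μ z = 1)
    (hμsupp : ∃ a b : ZMod p, a ≠ b ∧ μ a ≠ 0 ∧ μ b ≠ 0)
    (r : ℕ) (hr : 1 ≤ r) (ε : ℝ) (hε : 0 < ε) :
    ∃ K : ℕ, ∀ m n : ℕ, 1 ≤ m → 1 ≤ n →
      ∀ M : Matrix (Fin m) (Fin n) (ZMod p),
      ∀ I : Fin K → Finset (Fin n),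
        (∀ i j, i ≠ j → Disjoint (I i) (I j)) →
        (∀ i, r ≤ (M.submatrix id (fun j : ↥(I i) => (j : Fin n))).rank) →
        (∑ x ∈ Finset.univ.filter (fun x : Fin n → ZMod p => M.mulVec x = 0),
            ∏ i, μ (x i))
          ≤ ((p : ℝ))⁻¹ ^ r + ε := by
  have hp : p.Prime := Fact.out
  have hζ : IsPrimitiveRoot (Complex.exp (2 * Real.pi * Complex.I / p)) p :=
    Complex.isPrimitiveRoot_exp p hp.ne_zero
  set ψ : AddChar (ZMod p) ℂ :=
    AddChar.zmodChar p ((IsPrimitiveRoot.iff_def _ p).mp hζ).left with hψdef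
  have hψ : ψ.IsPrimitive := AddChar.zmodChar_primitive_of_primitive_root p hζ
  obtain ⟨δ, hδ0, hδ1, hδ⟩ := exists_delta hψ hμ0 hμ1 hμsupp
  obtain ⟨K, hK1, hKε⟩ : ∃ K : ℕ, 1 ≤ K ∧ (1 - δ) ^ K ≤ ε := by
    obtain ⟨K₀, hK₀⟩ := exists_pow_lt_of_lt_one hε (show 1 - δ < 1 by linarith)
    refine ⟨K₀ + 1, Nat.succ_le_succ (Nat.zero_le _), ?_⟩
    have h1 : (1 - δ) ^ (K₀ + 1) ≤ (1 - δ) ^ K₀ :=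
      pow_le_pow_of_le_one (by linarith) (by linarith) (Nat.le_succ _)
    linarith
  refine ⟨K, ?_⟩
  intro m n hm hn M I hdisj hrank
  classical
  set φ : ZMod p → ℂ := fun t => ∑ z, (μ z : ℂ) * ψ (t * z) with hφ
  set c : (Fin m → ZMod p) → (Fin n → ZMod p) := fun ξ => Matrix.vecMul ξ M with hc
  set P : ℝ := ∑ x ∈ Finset.univ.filter (fun x : Fin n → ZMod p => M.mulVec x = 0),
    ∏ i, μ (x i) with hP
  have hφle1 : ∀ t, ‖φ t‖ ≤ 1 := phi_le_one hμ0 hμ1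
  have hφδ : ∀ t, t ≠ 0 → ‖φ t‖ ≤ 1 - δ := hδ
  have hpt : ∀ (ξ : Fin m → ZMod p) (j : Fin n), c ξ j = ∑ k, ξ k * M k j := by
    intro ξ j
    simp [hc, Matrix.vecMul, dotProduct]
  -- Step A : Fourier identity
  have hA : ∑ ξ : Fin m → ZMod p, ∏ j : Fin n, φ (c ξ j) = ((p : ℂ)) ^ m * (P : ℂ) := by
    have hprod : ∀ ξ : Fin m → ZMod p, ∏ j : Fin n, φ (c ξ j)
        = ∑ x : Fin n → ZMod p, (∏ j, (μ (x j) : ℂ)) * ψ (∑ j, c ξ j * x j) := by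
      intro ξ
      have hfub := Finset.prod_univ_sum (fun _ : Fin n => (Finset.univ : Finset (ZMod p)))
        (fun j t => (μ t : ℂ) * ψ (c ξ j * t))
      rw [Fintype.piFinset_univ] at hfub
      calc ∏ j : Fin n, φ (c ξ j) = ∏ j : Fin n, ∑ t : ZMod p, (μ t : ℂ) * ψ (c ξ j * t) := rfl
      _ = ∑ x : Fin n → ZMod p, ∏ j : Fin n, (μ (x j) : ℂ) * ψ (c ξ j * x j) := hfub
      _ = ∑ x : Fin n → ZMod p, (∏ j, (μ (x j) : ℂ)) * ψ (∑ j, c ξ j * x j) := by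
          refine Finset.sum_congr rfl fun x _ => ?_
          rw [Finset.prod_mul_distrib, addChar_map_sum]
    simp_rw [hprod]
    rw [Finset.sum_comm]
    have hdot : ∀ (ξ : Fin m → ZMod p) (x : Fin n → ZMod p),
        (∑ j, c ξ j * x j) = ∑ k, ξ k * (M.mulVec x) k := by
      intro ξ x
      have h := Matrix.dotProduct_mulVec ξ M x
      simp only [dotProduct] at h
      rw [hc]
      exact h.symm
    calc ∑ x : Fin n → ZMod p, ∑ ξ : Fin m → ZMod p,
            (∏ j, (μ (x j) : ℂ)) * ψ (∑ j, c ξ j * x j)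
        = ∑ x : Fin n → ZMod p, (∏ j, (μ (x j) : ℂ)) *
            (if M.mulVec x = 0 then ((p : ℂ)) ^ m else 0) := by
          refine Finset.sum_congr rfl fun x _ => ?_
          rw [← Finset.mul_sum]
          congr 1
          calc ∑ ξ : Fin m → ZMod p, ψ (∑ j, c ξ j * x j)
              = ∑ ξ : Fin m → ZMod p, ψ (∑ k, ξ k * (M.mulVec x) k) :=
                Finset.sum_congr rfl fun ξ _ => by rw [hdot]
          _ = _ := sum_char_vec hψ _
      _ = ((p : ℂ)) ^ m * (P : ℂ) := by
          rw [hP]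
          push_cast
          rw [Finset.sum_filter, Finset.mul_sum]
          refine Finset.sum_congr rfl fun x _ => ?_
          split_ifs <;> ring
  have hPnn : 0 ≤ P := by
    rw [hP]
    exact Finset.sum_nonneg fun x _ => Finset.prod_nonneg fun i _ => hμ0 _
  -- Step B
  set R : ℝ := ∑ ξ : Fin m → ZMod p, ∏ j : Fin n, ‖φ (c ξ j)‖ with hR
  have hB : P * (p : ℝ) ^ m ≤ R := by
    have h1 : ‖((p : ℂ)) ^ m * (P : ℂ)‖ = (p : ℝ) ^ m * P := by
      rw [norm_mul, norm_pow, Complex.norm_natCast, Complex.norm_real,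
        Real.norm_eq_abs, abs_of_nonneg hPnn]
    have h2 : ‖∑ ξ : Fin m → ZMod p, ∏ j : Fin n, φ (c ξ j)‖ ≤ R := by
      refine (norm_sum_le _ _).trans ?_
      rw [hR]
      exact Finset.sum_le_sum fun ξ _ => le_of_eq (norm_prod _ _)
    rw [hA, h1] at h2
    linarith
  -- Step C
  set g : Fin K → (Fin m → ZMod p) → ℝ := fun i ξ => ∏ j ∈ I i, ‖φ (c ξ j)‖ with hg
  have hgnn : ∀ i ξ, 0 ≤ g i ξ := fun i ξ =>
    Finset.prod_nonneg fun _ _ => norm_nonneg _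
  have hgle1 : ∀ i ξ, g i ξ ≤ 1 := fun i ξ =>
    Finset.prod_le_one (fun _ _ => norm_nonneg _) (fun j _ => hφle1 _)
  have hC : ∀ ξ, ∏ j : Fin n, ‖φ (c ξ j)‖ ≤ ∏ i : Fin K, g i ξ := by
    intro ξ
    set B := (Finset.univ : Finset (Fin K)).biUnion I with hB'
    have hsplit : ∏ j : Fin n, ‖φ (c ξ j)‖
        = (∏ j ∈ Finset.univ \ B, ‖φ (c ξ j)‖) * ∏ j ∈ B, ‖φ (c ξ j)‖ :=
      (Finset.prod_sdiff (Finset.subset_univ B)).symm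
    rw [hsplit]
    have h1 : ∏ j ∈ Finset.univ \ B, ‖φ (c ξ j)‖ ≤ 1 :=
      Finset.prod_le_one (fun j _ => norm_nonneg _) (fun j _ => hφle1 _)
    have h2 : ∏ j ∈ B, ‖φ (c ξ j)‖ = ∏ i : Fin K, g i ξ := by
      rw [hB', Finset.prod_biUnion]
      intro i _ j _ hij
      exact hdisj i j hij
    have h3 : 0 ≤ ∏ j ∈ B, ‖φ (c ξ j)‖ := Finset.prod_nonneg fun _ _ => norm_nonneg _
    calc (∏ j ∈ Finset.univ \ B, ‖φ (c ξ j)‖) * ∏ j ∈ B, ‖φ (c ξ j)‖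
        ≤ 1 * ∏ j ∈ B, ‖φ (c ξ j)‖ := mul_le_mul_of_nonneg_right h1 h3
    _ = ∏ i : Fin K, g i ξ := by rw [one_mul, h2]
  -- Step D : AM-GM
  have hKpos : (0 : ℝ) < (K : ℝ) := by
    have : 0 < K := hK1
    exact_mod_cast this
  have hD : ∀ ξ, ∏ i : Fin K, g i ξ ≤ ∑ i : Fin K, (1 / (K : ℝ)) * (g i ξ) ^ K := by
    intro ξ
    have hw : ∀ i ∈ (Finset.univ : Finset (Fin K)), (0:ℝ) ≤ 1 / (K : ℝ) :=
      fun i _ => by positivity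
    have hw' : ∑ _i : Fin K, 1 / (K : ℝ) = 1 := by
      rw [Finset.sum_const, Finset.card_univ, Fintype.card_fin, nsmul_eq_mul]
      field_simp
    have hz : ∀ i ∈ (Finset.univ : Finset (Fin K)), (0:ℝ) ≤ (g i ξ) ^ K :=
      fun i _ => pow_nonneg (hgnn i ξ) K
    have h := Real.geom_mean_le_arith_mean_weighted Finset.univ
      (fun _ : Fin K => 1 / (K : ℝ)) (fun i => (g i ξ) ^ K) hw hw' hz
    have heq : ∀ i : Fin K, (((g i ξ) ^ K : ℝ)) ^ ((1 : ℝ) / (K : ℝ)) = g i ξ := by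
      intro i
      rw [← Real.rpow_natCast (g i ξ) K, ← Real.rpow_mul (hgnn i ξ),
        mul_one_div, div_self (ne_of_gt hKpos), Real.rpow_one]
    calc ∏ i : Fin K, g i ξ = ∏ i : Fin K, (((g i ξ) ^ K : ℝ)) ^ ((1 : ℝ) / (K : ℝ)) :=
          Finset.prod_congr rfl fun i _ => (heq i).symm
    _ ≤ ∑ i : Fin K, (1 / (K : ℝ)) * (g i ξ) ^ K := h
  -- Step E
  have hE : ∀ i : Fin K, ∑ ξ : Fin m → ZMod p, (g i ξ) ^ K
      ≤ (p : ℝ) ^ (m - r) + (p : ℝ) ^ m * (1 - δ) ^ K := by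
    intro i
    set A : Matrix (Fin m) (↥(I i)) (ZMod p) :=
      M.submatrix id (fun j : ↥(I i) => (j : Fin n)) with hAdef
    set q : (Fin m → ZMod p) → Prop := fun ξ => Matrix.vecMul ξ A = 0 with hq
    have hptA : ∀ (ξ : Fin m → ZMod p) (j : ↥(I i)),
        Matrix.vecMul ξ A j = c ξ (j : Fin n) := by
      intro ξ j
      rw [hpt]
      simp [hAdef, Matrix.vecMul, dotProduct, Matrix.submatrix_apply]
    have hsplit := Finset.sum_filter_add_sum_filter_not
      (Finset.univ : Finset (Fin m → ZMod p)) q (fun ξ => (g i ξ) ^ K)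
    have h1 : ∑ ξ ∈ Finset.univ.filter q, (g i ξ) ^ K
        ≤ ((Finset.univ.filter q).card : ℝ) := by
      have := Finset.sum_le_card_nsmul (Finset.univ.filter q) (fun ξ => (g i ξ) ^ K) 1
        (fun ξ _ => pow_le_one₀ (hgnn i ξ) (hgle1 i ξ))
      simpa using this
    have hTcard : ((Finset.univ.filter q).card : ℝ) ≤ (p : ℝ) ^ (m - r) := by
      have hcard := card_kernel_le A (hrank i)
      have : ((Finset.univ.filter q).card : ℝ) ≤ ((p ^ (m - r) : ℕ) : ℝ) := by
        exact_mod_cast hcard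
      simpa using this
    have h2 : ∑ ξ ∈ Finset.univ.filter (fun ξ => ¬ q ξ), (g i ξ) ^ K
        ≤ (p : ℝ) ^ m * (1 - δ) ^ K := by
      have hterm : ∀ ξ ∈ Finset.univ.filter (fun ξ => ¬ q ξ),
          (g i ξ) ^ K ≤ (1 - δ) ^ K := by
        intro ξ hξ
        have hnq : ¬ q ξ := (Finset.mem_filter.1 hξ).2
        have : ∃ j : ↥(I i), Matrix.vecMul ξ A j ≠ 0 := by
          by_contra hcon
          push_neg at hcon
          exact hnq (funext hcon)
        obtain ⟨j, hj⟩ := this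
        have hcj : c ξ (j : Fin n) ≠ 0 := by rw [← hptA ξ j]; exact hj
        have hgle : g i ξ ≤ 1 - δ := by
          have hmem : (j : Fin n) ∈ I i := j.2
          have hsplitg : g i ξ = ‖φ (c ξ (j : Fin n))‖ *
              ∏ j' ∈ (I i).erase (j : Fin n), ‖φ (c ξ j')‖ :=
            (Finset.mul_prod_erase _ _ hmem).symm
          have hb1 : ‖φ (c ξ (j : Fin n))‖ ≤ 1 - δ := hφδ _ hcj
          have hb2 : ∏ j' ∈ (I i).erase (j : Fin n), ‖φ (c ξ j')‖ ≤ 1 :=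
            Finset.prod_le_one (fun _ _ => norm_nonneg _) (fun j' _ => hφle1 _)
          have hb3 : (0:ℝ) ≤ ∏ j' ∈ (I i).erase (j : Fin n), ‖φ (c ξ j')‖ :=
            Finset.prod_nonneg fun _ _ => norm_nonneg _
          calc g i ξ = ‖φ (c ξ (j : Fin n))‖ *
              ∏ j' ∈ (I i).erase (j : Fin n), ‖φ (c ξ j')‖ := hsplitg
          _ ≤ (1 - δ) * 1 := mul_le_mul hb1 hb2 hb3 (by linarith)
          _ = 1 - δ := mul_one _
        exact pow_le_pow_left₀ (hgnn i ξ) hgle K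
      calc ∑ ξ ∈ Finset.univ.filter (fun ξ => ¬ q ξ), (g i ξ) ^ K
          ≤ ∑ _ξ ∈ Finset.univ.filter (fun ξ => ¬ q ξ), (1 - δ) ^ K :=
            Finset.sum_le_sum hterm
      _ = ((Finset.univ.filter (fun ξ => ¬ q ξ)).card : ℝ) * (1 - δ) ^ K := by
            rw [Finset.sum_const, nsmul_eq_mul]
      _ ≤ (p : ℝ) ^ m * (1 - δ) ^ K := by
            have hcle : (Finset.univ.filter (fun ξ => ¬ q ξ)).card
                ≤ Fintype.card (Fin m → ZMod p) := by
              rw [← Finset.card_univ]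
              exact Finset.card_filter_le _ _
            have hcard : Fintype.card (Fin m → ZMod p) = p ^ m := by
              rw [Fintype.card_fun, ZMod.card, Fintype.card_fin]
            have hcle' : (Finset.univ.filter (fun ξ => ¬ q ξ)).card ≤ p ^ m := by
              rw [← hcard]; exact hcle
            have : ((Finset.univ.filter (fun ξ => ¬ q ξ)).card : ℝ) ≤ (p:ℝ) ^ m := by
              exact_mod_cast hcle'
            have hpw : (0:ℝ) ≤ (1 - δ) ^ K := pow_nonneg (by linarith) K
            exact mul_le_mul_of_nonneg_right this hpw
    calc ∑ ξ : Fin m → ZMod p, (g i ξ) ^ K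
        = (∑ ξ ∈ Finset.univ.filter q, (g i ξ) ^ K)
          + ∑ ξ ∈ Finset.univ.filter (fun ξ => ¬ q ξ), (g i ξ) ^ K := hsplit.symm
    _ ≤ (p : ℝ) ^ (m - r) + (p : ℝ) ^ m * (1 - δ) ^ K := by linarith
  -- combine
  have hRle : R ≤ (p : ℝ) ^ (m - r) + (p : ℝ) ^ m * (1 - δ) ^ K := by
    calc R ≤ ∑ ξ : Fin m → ZMod p, ∏ i : Fin K, g i ξ := by
          rw [hR]; exact Finset.sum_le_sum fun ξ _ => hC ξ
    _ ≤ ∑ ξ : Fin m → ZMod p, ∑ i : Fin K, (1 / (K : ℝ)) * (g i ξ) ^ K :=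
          Finset.sum_le_sum fun ξ _ => hD ξ
    _ = ∑ i : Fin K, (1 / (K : ℝ)) * ∑ ξ : Fin m → ZMod p, (g i ξ) ^ K := by
          rw [Finset.sum_comm]
          exact Finset.sum_congr rfl fun i _ => (Finset.mul_sum _ _ _).symm
    _ ≤ ∑ _i : Fin K, (1 / (K : ℝ)) * ((p : ℝ) ^ (m - r) + (p : ℝ) ^ m * (1 - δ) ^ K) :=
          Finset.sum_le_sum fun i _ => mul_le_mul_of_nonneg_left (hE i) (by positivity)
    _ = (p : ℝ) ^ (m - r) + (p : ℝ) ^ m * (1 - δ) ^ K := by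
          rw [Finset.sum_const, Finset.card_univ, Fintype.card_fin, nsmul_eq_mul]
          field_simp
  have hrm : r ≤ m := le_trans (hrank ⟨0, hK1⟩) (rank_le_height' _)
  have hppos : (0 : ℝ) < (p : ℝ) ^ m := by
    have : (0:ℝ) < (p:ℝ) := by exact_mod_cast hp.pos
    positivity
  have hfinal : P ≤ (p : ℝ)⁻¹ ^ r + (1 - δ) ^ K := by
    have hsplitpow : (p : ℝ) ^ m = (p : ℝ) ^ (m - r) * (p : ℝ) ^ r := by
      rw [← pow_add, Nat.sub_add_cancel hrm]
    have hpr : (p : ℝ) ^ r ≠ 0 := by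
      have : (0:ℝ) < (p:ℝ) := by exact_mod_cast hp.pos
      positivity
    have h5a : (p : ℝ)⁻¹ ^ r * (p : ℝ) ^ m = (p : ℝ) ^ (m - r) := by
      rw [inv_pow, hsplitpow]
      field_simp
    have h6 : P * (p : ℝ) ^ m ≤ ((p : ℝ)⁻¹ ^ r + (1 - δ) ^ K) * (p : ℝ) ^ m := by
      have : ((p : ℝ)⁻¹ ^ r + (1 - δ) ^ K) * (p : ℝ) ^ m
          = (p : ℝ) ^ (m - r) + (p : ℝ) ^ m * (1 - δ) ^ K := by
        rw [add_mul, h5a]; ring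
      rw [this]
      linarith
    exact le_of_mul_le_mul_right h6 hppos
  calc P ≤ (p : ℝ)⁻¹ ^ r + (1 - δ) ^ K := hfinal
  _ ≤ (p : ℝ)⁻¹ ^ r + ε := by linarith
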